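/- Let θ ~ N(ξ, Ω) be a K-dimensional Gaussian prior, and let the likelihood of observing binary data y ∈ {0,1}^J be ∏_{j=1}^J Φ((2y_j−1)(B_j'θ + d_j)). Then the posterior density of θ is proportional to φ_K(θ − ξ; Ω) · Φ_J(S^{-1}(D₁ξ + D₂) + S^{-1}D₁(θ − ξ); S^{-1}S^{-1}), where D₁ = diag(2y−1)B, D₂ = diag(2y−1)d, and S = diag((D₁ⱼ'ΩD₁ⱼ + 1)^{1/2})_{j=1..J}. -/

import Mathlib

open MeasureTheory
open scoped Matrix BigOperators

/-- Standard normal probability density function. -/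
noncomputable def stdGaussPDF (t : ℝ) : ℝ := (Real.sqrt (2 * Real.pi))⁻¹ * Real.exp (-t ^ 2 / 2)

/-- Standard normal cumulative distribution function. -/
noncomputable def Phi (x : ℝ) : ℝ := ∫ t in Set.Iic x, stdGaussPDF t

/-- Density φ_K(x; Ω) of the centered K-variate Gaussian with covariance Ω. -/
noncomputable def mvGaussDensity {K : ℕ} (Ω : Matrix (Fin K) (Fin K) ℝ) (x : Fin K → ℝ) : ℝ :=
  (2 * Real.pi) ^ (-(K : ℝ) / 2) * Ω.det ^ (-(1 : ℝ) / 2) *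
    Real.exp (-(x ⬝ᵥ (Ω⁻¹ *ᵥ x)) / 2)

/-- The positive semidefinite square root `Matrix.PosSemidef.sqrt` of the older Mathlib. -/
noncomputable def posSemidefSqrt {n : Type*} [Fintype n] [DecidableEq n]
    {A : Matrix n n ℝ} (hA : A.PosSemidef) : Matrix n n ℝ :=
  hA.1.eigenvectorUnitary.1 * Matrix.diagonal ((↑) ∘ (Real.sqrt ∘ hA.1.eigenvalues)) *
    (star hA.1.eigenvectorUnitary : Matrix n n ℝ)

/-- CDF Φ_J(v; Σ) of the centered J-variate Gaussian with covariance Σ, defined via the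
image of a standard Gaussian product under the positive semidefinite square root of Σ. -/
noncomputable def gaussCDF {J : ℕ} (Sig : Matrix (Fin J) (Fin J) ℝ) (hSig : Sig.PosSemidef)
    (v : Fin J → ℝ) : ℝ :=
  (((MeasureTheory.Measure.pi fun _ : Fin J => ProbabilityTheory.gaussianReal 0 1).map
      fun z => posSemidefSqrt hSig *ᵥ z) {z | ∀ j, z j ≤ v j}).toReal

lemma gaussianReal_Iic_toReal (a : ℝ) :
    ((ProbabilityTheory.gaussianReal 0 1) (Set.Iic a)).toReal = Phi a := by
  rw [ProbabilityTheory.gaussianReal_apply_eq_integral 0 one_ne_zero,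
    ENNReal.toReal_ofReal
      (MeasureTheory.setIntegral_nonneg measurableSet_Iic fun x _ =>
        ProbabilityTheory.gaussianPDFReal_nonneg 0 1 x)]
  unfold Phi
  apply MeasureTheory.setIntegral_congr_fun measurableSet_Iic
  intro x _
  simp [ProbabilityTheory.gaussianPDFReal, stdGaussPDF]

lemma gaussCDF_diag_inv {J : ℕ} (s : Fin J → ℝ) (hs : ∀ j, 0 < s j)
    {Sig : Matrix (Fin J) (Fin J) ℝ} (hSig : Sig.PosSemidef)
    (hsq : posSemidefSqrt hSig = Matrix.diagonal (fun j => (s j)⁻¹)) (v : Fin J → ℝ) :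
    gaussCDF Sig hSig v = ∏ j, Phi (s j * v j) := by
  unfold gaussCDF
  rw [hsq]
  have hf : (fun z : Fin J → ℝ => Matrix.diagonal (fun j => (s j)⁻¹) *ᵥ z) =
      fun z j => (s j)⁻¹ * z j :=
    funext fun z => funext fun j => Matrix.mulVec_diagonal _ _ _
  have hmeas : Measurable (fun z : Fin J → ℝ => Matrix.diagonal (fun j => (s j)⁻¹) *ᵥ z) := by
    rw [hf]
    exact measurable_pi_lambda _ fun j => (measurable_pi_apply j).const_mul _
  have hset_eq : {z : Fin J → ℝ | ∀ j, z j ≤ v j} =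
      Set.pi Set.univ (fun j => Set.Iic (v j)) := by
    ext z
    simp only [Set.mem_setOf_eq, Set.mem_pi, Set.mem_univ, Set.mem_Iic, true_implies]
  have hset : MeasurableSet {z : Fin J → ℝ | ∀ j, z j ≤ v j} := by
    rw [hset_eq]
    exact MeasurableSet.univ_pi fun j => measurableSet_Iic
  rw [MeasureTheory.Measure.map_apply hmeas hset]
  have hpre : (fun z : Fin J → ℝ => Matrix.diagonal (fun j => (s j)⁻¹) *ᵥ z) ⁻¹'
      {z : Fin J → ℝ | ∀ j, z j ≤ v j} =
      Set.pi Set.univ (fun j => Set.Iic (s j * v j)) := by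
    rw [hf]
    ext z
    simp only [Set.mem_preimage, Set.mem_setOf_eq, Set.mem_pi, Set.mem_univ, Set.mem_Iic,
      true_implies]
    refine forall_congr' fun j => ?_
    rw [← div_le_iff₀' (hs j), div_eq_inv_mul]
  rw [hpre, MeasureTheory.Measure.pi_pi, ENNReal.toReal_prod]
  exact Finset.prod_congr rfl fun j _ => gaussianReal_Iic_toReal _

/-- With a N(ξ, Ω) prior on θ and probit likelihood ∏ⱼ Φ((2yⱼ−1)(Bⱼ'θ + dⱼ)), the posterior
density of θ is proportional to
φ_K(θ−ξ; Ω) · Φ_J(S⁻¹(D₁ξ + D₂) + S⁻¹D₁(θ−ξ); S⁻¹S⁻¹). -/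
theorem probit_posterior_unified_skew_normal (K J : ℕ) (ξ : Fin K → ℝ)
    (Ω : Matrix (Fin K) (Fin K) ℝ) (hΩ : Ω.PosDef)
    (B : Matrix (Fin J) (Fin K) ℝ) (d : Fin J → ℝ) (y : Fin J → ℝ)
    (hy : ∀ j, y j = 0 ∨ y j = 1)
    (D₁ : Matrix (Fin J) (Fin K) ℝ) (hD₁ : D₁ = Matrix.diagonal (fun j => 2 * y j - 1) * B)
    (D₂ : Fin J → ℝ) (hD₂ : D₂ = fun j => (2 * y j - 1) * d j)
    (S : Matrix (Fin J) (Fin J) ℝ)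
    (hS : S = Matrix.diagonal fun j => Real.sqrt ((D₁ j) ⬝ᵥ (Ω *ᵥ (D₁ j)) + 1))
    (hpsd : (S⁻¹ * S⁻¹).PosSemidef) :
    ∃ c > 0, ∀ θ : Fin K → ℝ,
      mvGaussDensity Ω (θ - ξ) * (∏ j, Phi ((2 * y j - 1) * ((B *ᵥ θ) j + d j))) =
        c * (mvGaussDensity Ω (θ - ξ) *
          gaussCDF (S⁻¹ * S⁻¹) hpsd
            (S⁻¹ *ᵥ (D₁ *ᵥ ξ + D₂) + S⁻¹ *ᵥ (D₁ *ᵥ (θ - ξ)))) := by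
  classical
  set s : Fin J → ℝ := fun j => Real.sqrt ((D₁ j) ⬝ᵥ (Ω *ᵥ (D₁ j)) + 1) with hs_def
  have hs_pos : ∀ j, 0 < s j := fun j => Real.sqrt_pos.mpr
    (by have := hΩ.posSemidef.dotProduct_mulVec_nonneg (D₁ j); simp at this; linarith)
  have hs_ne : ∀ j, s j ≠ 0 := fun j => (hs_pos j).ne'
  have hSinv : S⁻¹ = Matrix.diagonal (fun j => (s j)⁻¹) := by
    apply Matrix.inv_eq_right_inv
    rw [hS, Matrix.diagonal_mul_diagonal]
    convert Matrix.diagonal_one using 2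
    ext j
    exact mul_inv_cancel₀ (hs_ne j)
  have hdpsd : (Matrix.diagonal (fun j => (s j)⁻¹)).PosSemidef :=
    Matrix.PosSemidef.diagonal (fun j => inv_nonneg.mpr (hs_pos j).le)
  have hsqrt : posSemidefSqrt hpsd = Matrix.diagonal (fun j => (s j)⁻¹) := by
    have hD : IsSelfAdjoint (Matrix.diagonal (fun j => (s j)⁻¹)) :=
      Matrix.isHermitian_diagonal _
    have e1 : posSemidefSqrt hpsd = cfc Real.sqrt (S⁻¹ * S⁻¹) := by
      rw [Matrix.IsHermitian.cfc_eq hpsd.1, Matrix.IsHermitian.cfc, Unitary.conjStarAlgAut_apply]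
      rfl
    rw [e1, hSinv, ← pow_two, ← cfc_comp_pow Real.sqrt 2 _ (by fun_prop) hD]
    conv_rhs => rw [← cfc_id' ℝ (Matrix.diagonal (fun j => (s j)⁻¹)) hD]
    apply cfc_congr
    rintro x hx
    rw [spectrum_diagonal] at hx
    obtain ⟨j, rfl⟩ := hx
    exact Real.sqrt_sq (inv_nonneg.mpr (hs_pos j).le)
  refine ⟨1, one_pos, fun θ => ?_⟩
  rw [one_mul]
  congr 1
  rw [gaussCDF_diag_inv s hs_pos hpsd hsqrt]
  apply Finset.prod_congr rfl
  intro j _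
  congr 1
  rw [hSinv]
  simp only [Pi.add_apply, Matrix.mulVec_diagonal]
  have hD₁θ : ∀ w : Fin K → ℝ, (D₁ *ᵥ w) j = (2 * y j - 1) * (B *ᵥ w) j := by
    intro w
    rw [hD₁, ← Matrix.mulVec_mulVec, Matrix.mulVec_diagonal]
  have h1 : (D₁ *ᵥ (θ - ξ)) j = (2 * y j - 1) * (B *ᵥ θ) j - (2 * y j - 1) * (B *ᵥ ξ) j := by
    rw [show (D₁ *ᵥ (θ - ξ)) j = (D₁ *ᵥ θ) j - (D₁ *ᵥ ξ) j by rw [Matrix.mulVec_sub]; rfl,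
      hD₁θ, hD₁θ]
  have hclear : ∀ a b : ℝ, s j * ((s j)⁻¹ * a + (s j)⁻¹ * b) = a + b := by
    intro a b
    field_simp
    exact mul_div_cancel_left₀ _ (hs_ne j)
  rw [h1, hD₁θ, hD₂, hclear]
  ring
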